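/- arXiv:2603.25454 — 3 statements merged into one kernel-verified Lean document; each statement's English description precedes it below -/
import Mathlib

section
/- Let R be a commutative ring and let u, v, w, p, q, r, s be vectors in R^4. Consider the four lines M_1 = span(u, v), M_2 = span(v, w), M_3 = span(p, q), M_4 = span(r, s), where M_1 and M_2 share the point v, so that ⟨M_1 M_2⟩ = 0. Then the determinant of the 4×4 Gram matrix of M_1, M_2, M_3, M_4 equals the perfect square (⟨u v p q⟩⟨v w r s⟩ − ⟨v w p q⟩⟨u v r s⟩)^2, the square of the chain polynomial ⟨v p q | u w | v r s⟩. In particular, the LS discriminant of the three-mass box is the square of a single cluster variable. -/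
/-- The determinant of the 4×4 matrix with columns `w, x, y, z`. -/
def det4 {R : Type*} [CommRing R] (w x y z : Fin 4 → R) : R :=
  Matrix.det (Matrix.of fun i j => ![w, x, y, z] j i)

/-- The Gram matrix of four lines, the `i`-th spanned by the pair `m i 0, m i 1`:
zero diagonal and off-diagonal `(i,j)` entry `det[m i 0, m i 1, m j 0, m j 1]`. -/
def gram4 {R : Type*} [CommRing R] (m : Fin 4 → Fin 2 → (Fin 4 → R)) :
    Matrix (Fin 4) (Fin 4) R :=
  Matrix.of fun i j => if i = j then 0 else det4 (m i 0) (m i 1) (m j 0) (m j 1)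

lemma det4_dup {R : Type*} [CommRing R] (u v w : Fin 4 → R) : det4 u v v w = 0 := by
  simp [det4, Matrix.det_succ_row_zero, Fin.sum_univ_succ, Matrix.of_apply,
    show Fin.succAbove (1 : Fin 4) 2 = 3 from rfl, show Fin.succAbove (2 : Fin 4) 2 = 3 from rfl,
    show Fin.succAbove (3 : Fin 4) 2 = 2 from rfl]
  try ring

lemma det4_swap {R : Type*} [CommRing R] (w x y z : Fin 4 → R) :
    det4 y z w x = det4 w x y z := by
  simp [det4, Matrix.det_succ_row_zero, Fin.sum_univ_succ, Matrix.of_apply,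
    show Fin.succAbove (1 : Fin 4) 2 = 3 from rfl, show Fin.succAbove (2 : Fin 4) 2 = 3 from rfl,
    show Fin.succAbove (3 : Fin 4) 2 = 2 from rfl]
  try ring

/-- **The three-mass box discriminant is a perfect square.**
For the four lines `M₁ = span(u,v)`, `M₂ = span(v,w)`, `M₃ = span(p,q)`, `M₄ = span(r,s)`,
where `M₁` and `M₂` share the point `v` (so `⟨M₁M₂⟩ = 0`), the determinant of their 4×4
Gram matrix equals `(⟨u v p q⟩⟨v w r s⟩ − ⟨v w p q⟩⟨u v r s⟩)²`, the square of the chain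
polynomial `⟨v p q | u w | v r s⟩`. -/
theorem threeMassBox_discriminant_is_square
    {R : Type*} [CommRing R] (u v w p q r s : Fin 4 → R) :
    det4 u v v w = 0 ∧
    Matrix.det (gram4 ![![u, v], ![v, w], ![p, q], ![r, s]]) =
      (det4 u v p q * det4 v w r s - det4 v w p q * det4 u v r s) ^ 2 := by
  refine ⟨det4_dup u v w, ?_⟩
  have h : gram4 ![![u, v], ![v, w], ![p, q], ![r, s]] =
      !![0, 0, det4 u v p q, det4 u v r s;
         0, 0, det4 v w p q, det4 v w r s;
         det4 u v p q, det4 v w p q, 0, det4 p q r s;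
         det4 u v r s, det4 v w r s, det4 p q r s, 0] := by
    ext i j
    fin_cases i <;> fin_cases j <;>
      simp [gram4, Matrix.of_apply, det4_dup, det4_swap]
  rw [h]
  simp [Matrix.det_succ_row_zero, Fin.sum_univ_succ,
    show Fin.succAbove (1 : Fin 4) 2 = 3 from rfl, show Fin.succAbove (2 : Fin 4) 2 = 3 from rfl,
    show Fin.succAbove (3 : Fin 4) 2 = 2 from rfl]
  try ring
end

section
/- Let R be a commutative ring and let z_1, z_2, z_4, z_6, z_7, y be vectors in R^4. Define v := ⟨z_2 z_4 z_6 z_7⟩ z_1 − ⟨z_1 z_4 z_6 z_7⟩ z_2 (the intersection point of the line z_1z_2 with the plane z_4z_6z_7) and w := ⟨z_7 z_1 z_2 z_4⟩ z_6 − ⟨z_6 z_1 z_2 z_4⟩ z_7 (the intersection point of the line z_6z_7 with the plane z_1z_2z_4). Then the following determinant identities hold: (a) ⟨z_1 v w y⟩ = ⟨z_1 z_2 z_6 z_7⟩ · ⟨z_1 z_4 z_6 z_7⟩ · ⟨z_1 z_2 z_4 y⟩; (b) ⟨v w z_7 y⟩ = ⟨z_1 z_2 z_4 z_7⟩ ·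 ⟨z_1 z_2 z_6 z_7⟩ · ⟨z_4 z_6 z_7 y⟩. In particular, the pullback along the concurrent (black) three-mass-box promotion map sends the Plücker coordinates ⟨1267⟩, ⟨126i⟩ and ⟨267 8⟩ of the initial cluster to products of Plücker coordinates. -/

private lemma det4_expand {R : Type*} [CommRing R] (w x y z : Fin 4 → R) :
    det4 w x y z =
      w 0*x 1*y 2*z 3 - w 0*x 1*y 3*z 2 - w 0*x 2*y 1*z 3 + w 0*x 2*y 3*z 1
      + w 0*x 3*y 1*z 2 - w 0*x 3*y 2*z 1 - w 1*x 0*y 2*z 3 + w 1*x 0*y 3*z 2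
      + w 1*x 2*y 0*z 3 - w 1*x 2*y 3*z 0 - w 1*x 3*y 0*z 2 + w 1*x 3*y 2*z 0
      + w 2*x 0*y 1*z 3 - w 2*x 0*y 3*z 1 - w 2*x 1*y 0*z 3 + w 2*x 1*y 3*z 0
      + w 2*x 3*y 0*z 1 - w 2*x 3*y 1*z 0 - w 3*x 0*y 1*z 2 + w 3*x 0*y 2*z 1
      + w 3*x 1*y 0*z 2 - w 3*x 1*y 2*z 0 - w 3*x 2*y 0*z 1 + w 3*x 2*y 1*z 0 := by
  simp only [det4, Matrix.det_succ_row_zero, Fin.sum_univ_succ, Fin.sum_univ_zero,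
    Matrix.submatrix_apply, Matrix.of_apply, Matrix.cons_val', Matrix.cons_val_zero,
    Matrix.cons_val_one, Matrix.head_cons, Matrix.cons_val_fin_one, Matrix.cons_val_succ,
    Fin.succAbove_zero, Fin.succ_zero_eq_one, Fin.succ_one_eq_two,
    Matrix.det_fin_three, Fin.succAbove, Fin.castSucc, Fin.castAdd, Fin.castLE, Fin.lt_def,
    Matrix.cons_val_two, Matrix.tail_cons, Matrix.cons_val_three]
  norm_num
  simp only [show (Fin.succ 2 : Fin 4) = 3 from rfl]
  simp only [Matrix.cons_val]
  ring

/-- Three-term Grassmann-Plucker relation. -/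
private lemma det4_GP {R : Type*} [CommRing R] (p q a b c d : Fin 4 → R) :
    det4 p q a b * det4 p q c d - det4 p q a c * det4 p q b d
      + det4 p q a d * det4 p q b c = 0 := by
  simp only [det4_expand]; ring

private lemma det4_lin23 {R : Type*} [CommRing R] (x y : Fin 4 → R) (r s t u : R)
    (p q p' q' : Fin 4 → R) :
    det4 x (r • p - s • q) (t • p' - u • q') y =
      r*t * det4 x p p' y - r*u * det4 x p q' y
        - s*t * det4 x q p' y + s*u * det4 x q q' y := by
  simp only [det4_expand, Pi.sub_apply, Pi.smul_apply, smul_eq_mul]; ring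

private lemma det4_lin12 {R : Type*} [CommRing R] (x y : Fin 4 → R) (r s t u : R)
    (p q p' q' : Fin 4 → R) :
    det4 (r • p - s • q) (t • p' - u • q') x y =
      r*t * det4 p p' x y - r*u * det4 p q' x y
        - s*t * det4 q p' x y + s*u * det4 q q' x y := by
  simp only [det4_expand, Pi.sub_apply, Pi.smul_apply, smul_eq_mul]; ring

private lemma det4_eq_zero12 {R : Type*} [CommRing R] (x y z : Fin 4 → R) :
    det4 x x y z = 0 := by simp only [det4_expand]; ring

private lemma det4_eq_zero23 {R : Type*} [CommRing R] (x y z : Fin 4 → R) :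
    det4 x y y z = 0 := by simp only [det4_expand]; ring

private lemma det4_eq_zero34 {R : Type*} [CommRing R] (x y z : Fin 4 → R) :
    det4 x y z z = 0 := by simp only [det4_expand]; ring

/-- **Determinant identities for the black (concurrent) three-mass-box promotion map.**
With `v := ⟨z₂z₄z₆z₇⟩z₁ − ⟨z₁z₄z₆z₇⟩z₂` (the point `(z₁z₂) ⋆ (z₄z₆z₇)`) and
`w := ⟨z₇z₁z₂z₄⟩z₆ − ⟨z₆z₁z₂z₄⟩z₇` (the point `(z₆z₇) ⋆ (z₁z₂z₄)`):
(a) `⟨z₁ v w y⟩ = ⟨z₁z₂z₆z₇⟩·⟨z₁z₄z₆z₇⟩·⟨z₁z₂z₄y⟩`;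
(b) `⟨v w z₇ y⟩ = ⟨z₁z₂z₄z₇⟩·⟨z₁z₂z₆z₇⟩·⟨z₄z₆z₇y⟩`.
These say that the pullback along the black three-mass-box promotion map sends the
initial-cluster Plücker coordinates to products of Plücker coordinates. -/
theorem blackPromotion_cluster_identities
    {R : Type*} [CommRing R] (z1 z2 z4 z6 z7 y : Fin 4 → R) :
    let v := det4 z2 z4 z6 z7 • z1 - det4 z1 z4 z6 z7 • z2
    let w := det4 z7 z1 z2 z4 • z6 - det4 z6 z1 z2 z4 • z7
    det4 z1 v w y = det4 z1 z2 z6 z7 * det4 z1 z4 z6 z7 * det4 z1 z2 z4 y ∧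
    det4 v w z7 y = det4 z1 z2 z4 z7 * det4 z1 z2 z6 z7 * det4 z4 z6 z7 y := by
  intro v w
  have hC : det4 z7 z1 z2 z4 = - det4 z1 z2 z4 z7 := by simp only [det4_expand]; ring
  have hD : det4 z6 z1 z2 z4 = - det4 z1 z2 z4 z6 := by simp only [det4_expand]; ring
  constructor
  · simp only [v, w, det4_lin23, det4_eq_zero12, hC, hD, mul_zero, zero_sub, sub_zero,
      neg_neg, mul_neg, neg_mul]
    have gp := det4_GP z1 z2 z4 z6 z7 y
    linear_combination (- det4 z1 z4 z6 z7) * gp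
  · simp only [v, w, det4_lin12, det4_eq_zero23, det4_eq_zero34, hC, hD, mul_zero,
      zero_sub, sub_zero, add_zero, neg_neg, mul_neg, neg_mul]
    have h1 : det4 z6 z7 z1 z2 = det4 z1 z2 z6 z7 := by simp only [det4_expand]; ring
    have h2 : det4 z6 z7 z4 y = det4 z4 z6 z7 y := by simp only [det4_expand]; ring
    have h3 : det4 z6 z7 z1 z4 = det4 z1 z4 z6 z7 := by simp only [det4_expand]; ring
    have h4 : det4 z6 z7 z2 y = det4 z2 z6 z7 y := by simp only [det4_expand]; ring
    have h5 : det4 z6 z7 z1 y = det4 z1 z6 z7 y := by simp only [det4_expand]; ring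
    have h6 : det4 z6 z7 z2 z4 = det4 z2 z4 z6 z7 := by simp only [det4_expand]; ring
    have gp := det4_GP z6 z7 z1 z2 z4 y
    rw [h1, h2, h3, h4, h5, h6] at gp
    linear_combination (- det4 z1 z2 z4 z7) * gp
end

section
/- Let R be a commutative ring and let z_1, …, z_7 be vectors in R^4. Set q := ⟨z_2 z_4 z_5 z_6⟩ z_7 − ⟨z_2 z_4 z_5 z_7⟩ z_6, r := ⟨z_1 z_2 z_3 z_5⟩ z_4 − ⟨z_1 z_2 z_3 z_4⟩ z_5, and s := ⟨z_1 z_2 z_3 z_7⟩ z_6 − ⟨z_1 z_2 z_3 z_6⟩ z_7, and consider the four lines M_1 = span(z_1, z_2), M_2 = span(z_2, z_3), M_3 = span(z_4, z_5), M_4 = span(z_6, z_7) together with the concurrent solution L^(b) = span(z_2, q) and the coplanar solution L^(w) = span(r, s). Then: (a) all eight incidence pairings vanish identically, i.e. ⟨z_2 q m_1 m_2⟩ = 0 and ⟨r s m_1 m_2⟩ = 0 whenever (m_1, m_2) is the spanning pair of any of M_1, M_2, M_3, M_4, so both constructed lines meet all four external lines; (b) the pairing of the two solutions satisfies ⟨z_2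 q r s⟩ = −(⟨z_1 z_2 z_4 z_5⟩⟨z_2 z_3 z_6 z_7⟩ − ⟨z_2 z_3 z_4 z_5⟩⟨z_1 z_2 z_6 z_7⟩)^2, i.e. it equals minus the square of the chain polynomial, recovering the LS discriminant of the three-mass box up to sign. -/
set_option maxHeartbeats 1600000

section aux
variable {R : Type*} [CommRing R]

theorem det4_eq (w x y z : Fin 4 → R) :
    det4 w x y z = w 0 * x 1 * y 2 * z 3 - w 0 * x 1 * y 3 * z 2 - w 0 * x 2 * y 1 * z 3
      + w 0 * x 2 * y 3 * z 1 + w 0 * x 3 * y 1 * z 2 - w 0 * x 3 * y 2 * z 1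
      - w 1 * x 0 * y 2 * z 3 + w 1 * x 0 * y 3 * z 2 + w 1 * x 2 * y 0 * z 3
      - w 1 * x 2 * y 3 * z 0 - w 1 * x 3 * y 0 * z 2 + w 1 * x 3 * y 2 * z 0
      + w 2 * x 0 * y 1 * z 3 - w 2 * x 0 * y 3 * z 1 - w 2 * x 1 * y 0 * z 3
      + w 2 * x 1 * y 3 * z 0 + w 2 * x 3 * y 0 * z 1 - w 2 * x 3 * y 1 * z 0
      - w 3 * x 0 * y 1 * z 2 + w 3 * x 0 * y 2 * z 1 + w 3 * x 1 * y 0 * z 2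
      - w 3 * x 1 * y 2 * z 0 - w 3 * x 2 * y 0 * z 1 + w 3 * x 2 * y 1 * z 0 := by
  have h1 : (Fin.succ 2 : Fin 4) = 3 := rfl
  have h2 : ((2 : Fin 3).castSucc : Fin 4) = 2 := by decide
  have h3 : (Fin.succ 1 : Fin 4) = 2 := rfl
  simp [det4, Matrix.det_succ_row_zero, Fin.sum_univ_succ, -Fin.val_pos_iff, -Fin.val_fin_lt, Fin.succAbove, Fin.lt_def,
    Matrix.cons_val_succ, h1, h2, h3]
  ring

theorem det4_z14 (x u v : Fin 4 → R) : det4 x u v x = 0 := by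
  simp only [det4_eq]; ring

theorem det4_z13 (x u v : Fin 4 → R) : det4 x u x v = 0 := by
  simp only [det4_eq]; ring

theorem det4_z24 (w x y : Fin 4 → R) : det4 w x y x = 0 := by
  simp only [det4_eq]; ring

theorem det4_rot (w x y z : Fin 4 → R) : det4 w x y z = det4 w y z x := by
  simp only [det4_eq]; ring

theorem det4_swap23 (w x y z : Fin 4 → R) : det4 w x y z = -det4 w y x z := by
  simp only [det4_eq]; ring

theorem det4_c_last (w x y : Fin 4 → R) (a b : R) : det4 w (a • x - b • y) x y = 0 := by
  simp only [det4_eq, Pi.sub_apply, Pi.smul_apply, smul_eq_mul]; ring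

theorem det4_c_last' (w x y : Fin 4 → R) (a b : R) : det4 w (a • y - b • x) x y = 0 := by
  simp only [det4_eq, Pi.sub_apply, Pi.smul_apply, smul_eq_mul]; ring

theorem det4_c_first (w x y : Fin 4 → R) (a b : R) : det4 (a • x - b • y) w x y = 0 := by
  simp only [det4_eq, Pi.sub_apply, Pi.smul_apply, smul_eq_mul]; ring

theorem det4_c_q (x y z : Fin 4 → R) (a b c : R) : det4 x (a • y - b • z - c • x) y z = 0 := by
  simp only [det4_eq, Pi.sub_apply, Pi.smul_apply, smul_eq_mul]; ring

theorem det4_c_pair_xy (x y z : Fin 4 → R) (a b c d e f : R) :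
    det4 (a • x - b • y + c • z) (d • x - e • y + f • z) x y = 0 := by
  simp only [det4_eq, Pi.add_apply, Pi.sub_apply, Pi.smul_apply, smul_eq_mul]; ring

theorem det4_c_pair_yz (x y z : Fin 4 → R) (a b c d e f : R) :
    det4 (a • x - b • y + c • z) (d • x - e • y + f • z) y z = 0 := by
  simp only [det4_eq, Pi.add_apply, Pi.sub_apply, Pi.smul_apply, smul_eq_mul]; ring

theorem det4_tri (w p1 p2 p3 p4 p5 p6 : Fin 4 → R) (a b c d e f : R) :
    det4 w (a • p1 - b • p2) (c • p3 - d • p4) (e • p5 - f • p6) =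
      a*c*e * det4 w p1 p3 p5 - a*c*f * det4 w p1 p3 p6
      - a*d*e * det4 w p1 p4 p5 + a*d*f * det4 w p1 p4 p6
      - b*c*e * det4 w p2 p3 p5 + b*c*f * det4 w p2 p3 p6
      + b*d*e * det4 w p2 p4 p5 - b*d*f * det4 w p2 p4 p6 := by
  simp only [det4_eq, Pi.sub_apply, Pi.smul_apply, smul_eq_mul]; ring

theorem cramer_span (x1 x2 x3 x4 x5 : Fin 4 → R) :
    det4 x1 x2 x3 x5 • x4 - det4 x1 x2 x3 x4 • x5 =
      det4 x2 x3 x4 x5 • x1 - det4 x1 x3 x4 x5 • x2 + det4 x1 x2 x4 x5 • x3 := by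
  have e2 : (⟨2, by norm_num⟩ : Fin 4) = 2 := rfl
  have e3 : (⟨3, by norm_num⟩ : Fin 4) = 3 := rfl
  funext i
  fin_cases i <;>
    (simp only [det4_eq, Pi.add_apply, Pi.sub_apply, Pi.smul_apply, smul_eq_mul,
      Fin.zero_eta, Fin.mk_one, e2, e3]; ring)

theorem GP1 (z1 z2 z3 z4 z5 z6 z7 : Fin 4 → R) :
    det4 z2 z4 z5 z6 * det4 z1 z2 z3 z7 - det4 z2 z4 z5 z7 * det4 z1 z2 z3 z6 =
      det4 z2 z3 z4 z5 * det4 z1 z2 z6 z7 - det4 z1 z2 z4 z5 * det4 z2 z3 z6 z7 := by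
  simp only [det4_eq]; ring

theorem GP2 (z1 z2 z3 z4 z5 z6 z7 : Fin 4 → R) :
    det4 z1 z2 z3 z5 * det4 z2 z4 z6 z7 - det4 z1 z2 z3 z4 * det4 z2 z5 z6 z7 =
      det4 z1 z2 z4 z5 * det4 z2 z3 z6 z7 - det4 z2 z3 z4 z5 * det4 z1 z2 z6 z7 := by
  simp only [det4_eq]; ring

end aux

/-- **The two rational solutions of the three-mass box.**
With `q := ⟨z₂z₄z₅z₆⟩z₇ − ⟨z₂z₄z₅z₇⟩z₆`, `r := ⟨z₁z₂z₃z₅⟩z₄ − ⟨z₁z₂z₃z₄⟩z₅`,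
`s := ⟨z₁z₂z₃z₇⟩z₆ − ⟨z₁z₂z₃z₆⟩z₇`, the concurrent solution `L^(b) = span(z₂, q)` and the
coplanar solution `L^(w) = span(r, s)` meet all four external lines
`M₁ = span(z₁,z₂)`, `M₂ = span(z₂,z₃)`, `M₃ = span(z₄,z₅)`, `M₄ = span(z₆,z₇)`
(all eight incidence pairings vanish), and the pairing of the two solutions satisfies
`⟨z₂ q r s⟩ = −(⟨z₁z₂z₄z₅⟩⟨z₂z₃z₆z₇⟩ − ⟨z₂z₃z₄z₅⟩⟨z₁z₂z₆z₇⟩)²`,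
minus the square of the chain polynomial, i.e. the LS discriminant of the three-mass box
up to sign. -/
theorem threeMassBox_rational_solutions
    {R : Type*} [CommRing R] (z1 z2 z3 z4 z5 z6 z7 : Fin 4 → R) :
    let q := det4 z2 z4 z5 z6 • z7 - det4 z2 z4 z5 z7 • z6
    let r := det4 z1 z2 z3 z5 • z4 - det4 z1 z2 z3 z4 • z5
    let s := det4 z1 z2 z3 z7 • z6 - det4 z1 z2 z3 z6 • z7
    let m : Fin 4 → Fin 2 → (Fin 4 → R) := ![![z1, z2], ![z2, z3], ![z4, z5], ![z6, z7]]
    (∀ k : Fin 4, det4 z2 q (m k 0) (m k 1) = 0 ∧ det4 r s (m k 0) (m k 1) = 0) ∧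
    det4 z2 q r s =
      -(det4 z1 z2 z4 z5 * det4 z2 z3 z6 z7 - det4 z2 z3 z4 z5 * det4 z1 z2 z6 z7) ^ 2 := by
  intro q r s m
  have hq : q = det4 z2 z4 z5 z6 • z7 - det4 z2 z4 z5 z7 • z6 := rfl
  have hr : r = det4 z1 z2 z3 z5 • z4 - det4 z1 z2 z3 z4 • z5 := rfl
  have hs : s = det4 z1 z2 z3 z7 • z6 - det4 z1 z2 z3 z6 • z7 := rfl
  -- span forms via Cramer
  have hq' : q = det4 z2 z5 z6 z7 • z4 - det4 z2 z4 z6 z7 • z5 - det4 z4 z5 z6 z7 • z2 := by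
    rw [hq]
    have h := cramer_span z2 z4 z5 z6 z7
    -- h : ⟨2456⟩•z7? no: det4 z2 z4 z5 z7 • z6 - det4 z2 z4 z5 z6 • z7 = ...
    -- cramer_span x1..x5 := z2 z4 z5 z6 z7 gives:
    -- det4 z2 z4 z5 z7 • z6 - det4 z2 z4 z5 z6 • z7
    --   = det4 z4 z5 z6 z7 • z2 - det4 z2 z5 z6 z7 • z4 + det4 z2 z4 z6 z7 • z5
    funext i
    have hi := congrFun h i
    simp only [Pi.add_apply, Pi.sub_apply, Pi.smul_apply, smul_eq_mul] at hi ⊢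
    linear_combination -hi
  have hr' : r = det4 z2 z3 z4 z5 • z1 - det4 z1 z3 z4 z5 • z2 + det4 z1 z2 z4 z5 • z3 := by
    rw [hr]; exact cramer_span z1 z2 z3 z4 z5
  have hs' : s = det4 z2 z3 z6 z7 • z1 - det4 z1 z3 z6 z7 • z2 + det4 z1 z2 z6 z7 • z3 := by
    rw [hs]; exact cramer_span z1 z2 z3 z6 z7
  constructor
  · intro k
    fin_cases k
    · constructor
      · show det4 z2 q z1 z2 = 0
        exact det4_z14 z2 q z1
      · show det4 r s z1 z2 = 0
        rw [hr', hs']; exact det4_c_pair_xy z1 z2 z3 _ _ _ _ _ _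
    · constructor
      · show det4 z2 q z2 z3 = 0
        exact det4_z13 z2 q z3
      · show det4 r s z2 z3 = 0
        rw [hr', hs']; exact det4_c_pair_yz z1 z2 z3 _ _ _ _ _ _
    · constructor
      · show det4 z2 q z4 z5 = 0
        rw [hq']; exact det4_c_q z2 z4 z5 _ _ _
      · show det4 r s z4 z5 = 0
        rw [hr]; exact det4_c_first s z4 z5 _ _
    · constructor
      · show det4 z2 q z6 z7 = 0
        rw [hq]; exact det4_c_last' z2 z6 z7 _ _
      · show det4 r s z6 z7 = 0
        rw [hs]; exact det4_c_last r z6 z7 _ _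
  · rw [hq, hr, hs, det4_tri]
    linear_combination
      (det4 z2 z4 z5 z6 * det4 z1 z2 z3 z5 * det4 z1 z2 z3 z7) * det4_rot z2 z7 z4 z6
      - (det4 z2 z4 z5 z6 * det4 z1 z2 z3 z5 * det4 z1 z2 z3 z6) * det4_z24 z2 z7 z4
      - (det4 z2 z4 z5 z6 * det4 z1 z2 z3 z4 * det4 z1 z2 z3 z7) * det4_rot z2 z7 z5 z6
      + (det4 z2 z4 z5 z6 * det4 z1 z2 z3 z4 * det4 z1 z2 z3 z6) * det4_z24 z2 z7 z5
      - (det4 z2 z4 z5 z7 * det4 z1 z2 z3 z5 * det4 z1 z2 z3 z7) * det4_z24 z2 z6 z4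
      + (det4 z2 z4 z5 z7 * det4 z1 z2 z3 z5 * det4 z1 z2 z3 z6) * det4_swap23 z2 z6 z4 z7
      + (det4 z2 z4 z5 z7 * det4 z1 z2 z3 z4 * det4 z1 z2 z3 z7) * det4_z24 z2 z6 z5
      - (det4 z2 z4 z5 z7 * det4 z1 z2 z3 z4 * det4 z1 z2 z3 z6) * det4_swap23 z2 z6 z5 z7
      + (det4 z1 z2 z3 z5 * det4 z2 z4 z6 z7 - det4 z1 z2 z3 z4 * det4 z2 z5 z6 z7) *
          GP1 z1 z2 z3 z4 z5 z6 z7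
      + (det4 z2 z3 z4 z5 * det4 z1 z2 z6 z7 - det4 z1 z2 z4 z5 * det4 z2 z3 z6 z7) *
          GP2 z1 z2 z3 z4 z5 z6 z7
end
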